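/- arXiv:1004.4376 — 2 statements merged into one kernel-verified Lean document; each statement's English description precedes it below -/
import Mathlib

section
/- Suppose a group G acts geometrically on two CAT(0) spaces X and Y, let x₀ ∈ X, y₀ ∈ Y, and suppose condition (*) holds. For any sequence {g_i} ⊂ G, if {g_i x₀} is a Cauchy sequence in X ∪ ∂X, then {g_i y₀} is a Cauchy sequence in Y ∪ ∂Y. In fact, with quasi-isometry constants λ, C for the orbit map, one may take M′ = λ(2N+1) + 2M + C: for any R > 0 there is i₀ ∈ ℕ with g_i y₀ ∈ U(g_{i₀} y₀; R, M′) for all i ≥ i₀. -/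
open Metric Set Pointwise

set_option maxHeartbeats 1000000

/-- A unit-speed geodesic segment from `x` to `y` in a metric space. -/
structure GeoSeg (X : Type*) [MetricSpace X] (x y : X) where
  toFun : ℝ → X
  source : toFun 0 = x
  target : toFun (dist x y) = y
  isom : ∀ ⦃s : ℝ⦄, s ∈ Set.Icc 0 (dist x y) → ∀ ⦃t : ℝ⦄, t ∈ Set.Icc 0 (dist x y) →
      dist (toFun s) (toFun t) = |s - t|

/-- A geodesic metric space: any two points are joined by a geodesic segment. -/
def GeodesicSpace (X : Type*) [MetricSpace X] : Prop :=
  ∀ x y : X, Nonempty (GeoSeg X x y)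

/-- The point at arclength `s` on the Euclidean segment from `p` to `q`
(the comparison point in the Euclidean plane). -/
noncomputable def euclPt (p q : EuclideanSpace ℝ (Fin 2)) (s : ℝ) :
    EuclideanSpace ℝ (Fin 2) :=
  p + (s / dist p q) • (q - p)

/-- A geodesic metric space is CAT(0) if every geodesic triangle satisfies the
comparison inequality: for a triangle with vertices `x, y, z`, sides `γ` (from `x` to `y`)
and `δ` (from `x` to `z`), a comparison triangle `x', y', z'` in the Euclidean plane
(same side lengths), and points on the two sides with their Euclidean comparison points,
the distance in `X` is at most the Euclidean distance of the comparison points. -/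
def IsCAT0 (X : Type*) [MetricSpace X] : Prop :=
  GeodesicSpace X ∧
  ∀ (x y z : X) (γ : GeoSeg X x y) (δ : GeoSeg X x z)
    (x' y' z' : EuclideanSpace ℝ (Fin 2)),
    dist x' y' = dist x y → dist x' z' = dist x z → dist y' z' = dist y z →
    ∀ ⦃s : ℝ⦄, s ∈ Set.Icc 0 (dist x y) → ∀ ⦃t : ℝ⦄, t ∈ Set.Icc 0 (dist x z) →
      dist (γ.toFun s) (δ.toFun t) ≤ dist (euclPt x' y' s) (euclPt x' z' t)

/-- A geodesic ray issuing from the basepoint `x₀`. In a proper CAT(0) space each point of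
the boundary `∂X` is represented by a unique geodesic ray from `x₀`, so `RayFrom X x₀`
is identified with `∂X`. As a subtype of `ℝ → X` it inherits the topology of pointwise
convergence, which coincides with the cone topology on `∂X`. -/
abbrev RayFrom (X : Type*) [MetricSpace X] (x₀ : X) : Type _ :=
  {ξ : ℝ → X // ξ 0 = x₀ ∧
    ∀ ⦃s : ℝ⦄, 0 ≤ s → ∀ ⦃t : ℝ⦄, 0 ≤ t → dist (ξ s) (ξ t) = |s - t|}

/-- Two rays (as functions) are asymptotic: the image of one lies in a bounded
neighborhood of the image of the other. -/
def Asymp {X : Type*} [MetricSpace X] (ξ ζ : ℝ → X) : Prop :=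
  ∃ N : ℝ, ∀ t : ℝ, 0 ≤ t → ∃ s : ℝ, 0 ≤ s ∧ dist (ξ t) (ζ s) ≤ N

/-- `x ∈ U(α; r, ε)` for `α` a boundary point given by the ray `ξ` from `x₀`:
`x ∉ B(x₀,r)` and `d(ξ(r), ξ_x(r)) < ε`, where `ξ_x` is the geodesic from `x₀` to `x`
(unique in a CAT(0) space, so we quantify over all of them). -/
def memU {X : Type*} [MetricSpace X] (x₀ : X) (ξ : ℝ → X) (r ε : ℝ) (x : X) : Prop :=
  r < dist x₀ x ∧ ∀ γ : GeoSeg X x₀ x, dist (ξ r) (γ.toFun r) < ε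

/-- `x ∈ U(z; r, ε)` for a point `z ∈ X`: `x ∉ B(x₀,r)` and
`d(ξ_z(r), ξ_x(r)) < ε` for the geodesics `ξ_z, ξ_x` from `x₀`. -/
def memUpt {X : Type*} [MetricSpace X] (x₀ z : X) (r ε : ℝ) (x : X) : Prop :=
  r < dist x₀ x ∧ ∀ γz : GeoSeg X x₀ z, ∀ γ : GeoSeg X x₀ x,
    dist (γz.toFun r) (γ.toFun r) < ε

/-- The sequence `x` is a Cauchy sequence in `X ∪ ∂X`: there is `ε₀ > 0` such that for
every `r > 0` there is `i₀` with `x i ∈ U(x i₀; r, ε₀)` for all `i ≥ i₀`. -/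
def ConeCauchy {X : Type*} [MetricSpace X] (x₀ : X) (x : ℕ → X) : Prop :=
  ∃ ε₀ > (0:ℝ), ∀ r > (0:ℝ), ∃ i₀ : ℕ, ∀ i ≥ i₀, memUpt x₀ (x i₀) r ε₀ (x i)

/-- The sequence `x` converges in `X ∪ ∂X` (cone topology) to the boundary point `α`,
represented by its geodesic ray from `x₀`: it is eventually in every basic
neighborhood `U(α; r, ε)`. -/
def ConvTo {X : Type*} [MetricSpace X] (x₀ : X) (x : ℕ → X) (α : RayFrom X x₀) : Prop :=
  ∀ ε > (0:ℝ), ∀ r > (0:ℝ), ∃ i₀ : ℕ, ∀ i ≥ i₀, memU x₀ α.1 r ε (x i)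

/-- The sequence `x` is unbounded in `X`. -/
def UnboundedSeq {X : Type*} [MetricSpace X] (x₀ : X) (x : ℕ → X) : Prop :=
  ∀ R : ℝ, ∃ i : ℕ, R < dist x₀ (x i)

/-- A geometric action: an action by isometries which is proper and cocompact. -/
def GeometricAction (G X : Type*) [Group G] [MetricSpace X] [MulAction G X] : Prop :=
  (∀ g : G, Isometry fun x : X => g • x) ∧
  (∀ K L : Set X, IsCompact K → IsCompact L → {g : G | (g • K) ∩ L ≠ ∅}.Finite) ∧
  ∃ K : Set X, IsCompact K ∧ ⋃ g : G, g • K = Set.univ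

/-- The geodesic segment `[x, z]` meets the closed ball `B(p, t)`. -/
def SegMeetsBall {X : Type*} [MetricSpace X] (x z p : X) (t : ℝ) : Prop :=
  ∃ γ : GeoSeg X x z, ∃ s ∈ Set.Icc (0:ℝ) (dist x z), dist (γ.toFun s) p ≤ t

/-- Condition (*) with constants `N, M`: `G·B(x₀,N) = X`, `G·B(y₀,M) = Y`, and for all
`g, a ∈ G`, if `[x₀, g x₀] ∩ B(a x₀, N) ≠ ∅` in `X` then `[y₀, g y₀] ∩ B(a y₀, M) ≠ ∅`
in `Y`. -/
def CondStar (G : Type*) {X Y : Type*} [Group G] [MetricSpace X] [MetricSpace Y]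
    [MulAction G X] [MulAction G Y] (x₀ : X) (y₀ : Y) (N M : ℝ) : Prop :=
  0 < N ∧ 0 < M ∧
  (⋃ g : G, g • Metric.closedBall x₀ N) = Set.univ ∧
  (⋃ g : G, g • Metric.closedBall y₀ M) = Set.univ ∧
  ∀ g a : G, SegMeetsBall x₀ (g • x₀) (a • x₀) N → SegMeetsBall y₀ (g • y₀) (a • y₀) M

/-- `lam, C` are quasi-isometry constants for the orbit map `g x₀ ↦ g y₀`:
`(1/λ) d_Y(g y₀, h y₀) − C ≤ d_X(g x₀, h x₀) ≤ λ d_Y(g y₀, h y₀) + C`. -/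
def QIconsts (G : Type*) {X Y : Type*} [Group G] [MetricSpace X] [MetricSpace Y]
    [MulAction G X] [MulAction G Y] (x₀ : X) (y₀ : Y) (lam C : ℝ) : Prop :=
  0 < lam ∧ 0 < C ∧ ∀ g h : G,
    (1 / lam) * dist (g • y₀) (h • y₀) - C ≤ dist (g • x₀) (h • x₀) ∧
    dist (g • x₀) (h • x₀) ≤ lam * dist (g • y₀) (h • y₀) + C


section AuxLemmas

lemma exists_comparison (T D : ℝ) (hT : 0 < T) (hD : 0 ≤ D) (hDT : D ≤ 2*T) :
    ∃ y' z' : EuclideanSpace ℝ (Fin 2),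
      dist (0 : EuclideanSpace ℝ (Fin 2)) y' = T ∧
      dist (0 : EuclideanSpace ℝ (Fin 2)) z' = T ∧ dist y' z' = D := by
  set a : ℝ := T - D^2/(2*T) with ha
  have haT : a ≤ T := by
    have : 0 ≤ D^2/(2*T) := by positivity
    simp [ha]; linarith
  have haT' : -T ≤ a := by
    have h1 : D^2 ≤ (2*T)*(2*T) := by nlinarith
    have h2 : D^2/(2*T) ≤ 2*T := by
      rw [div_le_iff₀ (by linarith)]; nlinarith
    simp [ha]; linarith
  have hb2 : 0 ≤ T^2 - a^2 := by nlinarith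
  set b : ℝ := Real.sqrt (T^2 - a^2) with hb
  have hbsq : b^2 = T^2 - a^2 := Real.sq_sqrt hb2
  refine ⟨!₂[T, 0], !₂[a, b], ?_, ?_, ?_⟩
  · rw [EuclideanSpace.dist_eq]
    simp [Fin.sum_univ_two, Real.dist_eq, abs_of_nonneg hT.le]
    rw [Real.sqrt_sq hT.le]
  · rw [EuclideanSpace.dist_eq]
    simp [Fin.sum_univ_two, Real.dist_eq, sq_abs]
    rw [show a^2 + b^2 = T^2 by rw [hbsq]; ring, Real.sqrt_sq hT.le]
  · rw [EuclideanSpace.dist_eq]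
    simp [Fin.sum_univ_two, Real.dist_eq, sq_abs]
    have h5 : (T - a)^2 + b^2 = D^2 := by
      have ha2 : a = T - D^2/(2*T) := ha
      field_simp at ha2 ⊢
      nlinarith [hbsq]
    rw [h5, Real.sqrt_sq hD]

lemma GeoSeg.dist_source {X : Type*} [MetricSpace X] {x u : X} (γ : GeoSeg X x u)
    {t : ℝ} (ht : t ∈ Set.Icc 0 (dist x u)) : dist x (γ.toFun t) = t := by
  have h0 : (0:ℝ) ∈ Set.Icc 0 (dist x u) := ⟨le_rfl, dist_nonneg⟩
  have := γ.isom h0 ht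
  rw [γ.source] at this
  rw [this, abs_of_nonpos (by linarith [ht.1]), neg_sub, sub_zero]

noncomputable def GeoSeg.restrict {X : Type*} [MetricSpace X] {x u : X} (γ : GeoSeg X x u)
    {T : ℝ} (h : T ∈ Set.Icc 0 (dist x u)) : GeoSeg X x (γ.toFun T) where
  toFun := γ.toFun
  source := γ.source
  target := by rw [γ.dist_source h]
  isom := by
    intro s hs t ht
    rw [γ.dist_source h] at hs ht
    exact γ.isom ⟨hs.1, hs.2.trans h.2⟩ ⟨ht.1, ht.2.trans h.2⟩

@[simp] lemma GeoSeg.restrict_toFun {X : Type*} [MetricSpace X] {x u : X} (γ : GeoSeg X x u)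
    {T : ℝ} (h : T ∈ Set.Icc 0 (dist x u)) : (γ.restrict h).toFun = γ.toFun := rfl

lemma cat0_convex {X : Type*} [MetricSpace X] (hX : IsCAT0 X) {x u v : X}
    (γ : GeoSeg X x u) (δ : GeoSeg X x v) (h : dist x u = dist x v)
    {t : ℝ} (ht : t ∈ Set.Icc 0 (dist x u)) :
    dist (γ.toFun t) (δ.toFun t) ≤ (t / dist x u) * dist u v := by
  rcases eq_or_lt_of_le (dist_nonneg : (0:ℝ) ≤ dist x u) with hT | hT
  · have ht0 : t = 0 := le_antisymm (ht.2.trans hT.symm.le) ht.1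
    subst ht0
    rw [γ.source, δ.source, dist_self]
    positivity
  · set T := dist x u with hTdef
    have hDT : dist u v ≤ 2*T := by
      have h1 := dist_triangle u x v
      rw [dist_comm u x] at h1
      linarith [h1, h]
    obtain ⟨y', z', hy', hz', hyz'⟩ := exists_comparison T (dist u v) hT dist_nonneg hDT
    have key := hX.2 x u v γ δ 0 y' z' (by simpa using hy') (by rw [← h]; simpa using hz')
      hyz' ht (by rw [← h]; exact ht)
    refine key.trans (le_of_eq ?_)
    have h0y : dist (0 : EuclideanSpace ℝ (Fin 2)) y' = T := by simpa using hy'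
    have h0z : dist (0 : EuclideanSpace ℝ (Fin 2)) z' = T := by simpa using hz'
    rw [euclPt, euclPt, h0y, h0z]
    simp only [sub_zero, zero_add]
    rw [dist_smul₀, Real.norm_eq_abs, abs_of_nonneg (div_nonneg ht.1 hT.le), hyz']

lemma geoSeg_unique {X : Type*} [MetricSpace X] (hX : IsCAT0 X) {x u : X}
    (γ δ : GeoSeg X x u) {t : ℝ} (ht : t ∈ Set.Icc 0 (dist x u)) :
    γ.toFun t = δ.toFun t := by
  have h1 := cat0_convex hX γ δ rfl ht
  rw [dist_self, mul_zero] at h1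
  exact dist_le_zero.mp h1

end AuxLemmas

/-- Under condition (*), if `{g_i x₀}` is a Cauchy sequence in `X ∪ ∂X`
then `{g_i y₀}` is a Cauchy sequence in `Y ∪ ∂Y`; in fact, with quasi-isometry constants
`λ, C`, one may take `M' = λ(2N+1) + 2M + C`: for any `R > 0` there is `i₀` with
`g_i y₀ ∈ U(g_{i₀} y₀; R, M')` for all `i ≥ i₀`. -/
theorem stmt2 {G X Y : Type*} [Group G] [MetricSpace X] [MetricSpace Y]
    [MulAction G X] [MulAction G Y]
    (hX : IsCAT0 X) (hY : IsCAT0 Y)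
    (hGX : GeometricAction G X) (hGY : GeometricAction G Y)
    (x₀ : X) (y₀ : Y) (N M : ℝ) (hstar : CondStar G x₀ y₀ N M)
    (lam C : ℝ) (hqi : QIconsts G x₀ y₀ lam C)
    (g : ℕ → G) (hc : ConeCauchy x₀ (fun i => g i • x₀)) :
    ConeCauchy y₀ (fun i => g i • y₀) ∧
      ∀ R > (0:ℝ), ∃ i₀ : ℕ, ∀ i ≥ i₀,
        memUpt y₀ (g i₀ • y₀) R (lam * (2 * N + 1) + 2 * M + C) (g i • y₀) := by
  obtain ⟨hN, hM, hcovX, hcovY, hseg⟩ := hstar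
  obtain ⟨hlam, hC, hqi'⟩ := hqi
  obtain ⟨ε₀, hε₀, H⟩ := hc
  -- covering helper in X
  have hcov : ∀ p : X, ∃ a : G, dist p (a • x₀) ≤ N := by
    intro p
    have hp : p ∈ ⋃ a : G, a • Metric.closedBall x₀ N := by rw [hcovX]; trivial
    obtain ⟨a, hpa⟩ := Set.mem_iUnion.mp hp
    obtain ⟨b, hb, hab⟩ := hpa
    refine ⟨a, ?_⟩
    rw [← hab, (hGX.1 a).dist_eq]
    exact Metric.mem_closedBall.mp hb
  -- quasi-isometry helpers
  have qiYX : ∀ b c : G, dist (b • y₀) (c • y₀) ≤ lam * (dist (b • x₀) (c • x₀) + C) := by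
    intro b c
    have h1 := (hqi' b c).1
    have h2 := mul_le_mul_of_nonneg_left h1 hlam.le
    rw [mul_sub, ← mul_assoc, mul_one_div, div_self hlam.ne', one_mul] at h2
    linarith [h2]
  have qiXY : ∀ b c : G, dist (b • x₀) (c • x₀) ≤ lam * dist (b • y₀) (c • y₀) + C :=
    fun b c => (hqi' b c).2
  set M' : ℝ := lam * (2 * N + 1) + 2 * M + C with hM'def
  set E₀ : ℝ := 2*M + lam*(2*N + 1 + C) with hE₀def
  have hM' : 0 < M' := by
    have := mul_pos hlam (show (0:ℝ) < 2*N+1 by linarith)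
    rw [hM'def]; linarith
  have hE₀ : 0 < E₀ := by
    have := mul_pos hlam (show (0:ℝ) < 2*N+1+C by linarith)
    rw [hE₀def]; linarith
  have main : ∀ R > (0:ℝ), ∃ i₀ : ℕ, ∀ i ≥ i₀, memUpt y₀ (g i₀ • y₀) R M' (g i • y₀) := by
    intro R hR
    have hq0 : 0 ≤ 2*E₀*R/M' :=
      div_nonneg (mul_nonneg (mul_nonneg (by norm_num) hE₀.le) hR.le) hM'.le
    set r : ℝ := lam * (2*E₀*R/M' + M + R) + N + C + 1 with hrdef
    have hA : 0 < 2*E₀*R/M' + M + R := by linarith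
    have hr : 0 < r := by
      have := mul_pos hlam hA
      rw [hrdef]; linarith
    set r'' : ℝ := r * (ε₀ + 1) with hr''def
    have hrr'' : r ≤ r'' := by
      rw [hr''def]
      calc r = r * 1 := by ring
        _ ≤ r * (ε₀ + 1) := mul_le_mul_of_nonneg_left (by linarith) hr.le
    have hr'' : 0 < r'' := lt_of_lt_of_le hr hrr''
    obtain ⟨i₀, hH⟩ := H r'' hr''
    refine ⟨i₀, fun i hi => ?_⟩
    obtain ⟨ξ₀⟩ := hX.1 x₀ (g i₀ • x₀)
    obtain ⟨ξ⟩ := hX.1 x₀ (g i • x₀)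
    have h0 := hH i₀ le_rfl
    have h1 := hH i hi
    have hd0 : r'' < dist x₀ (g i₀ • x₀) := h0.1
    have hd1 : r'' < dist x₀ (g i • x₀) := h1.1
    have hclose'' : dist (ξ₀.toFun r'') (ξ.toFun r'') < ε₀ := h1.2 ξ₀ ξ
    have hrIcc0 : r'' ∈ Set.Icc 0 (dist x₀ (g i₀ • x₀)) := ⟨hr''.le, hd0.le⟩
    have hrIcc1 : r'' ∈ Set.Icc 0 (dist x₀ (g i • x₀)) := ⟨hr''.le, hd1.le⟩
    -- upgrade closeness from ε₀ at r'' to < 1 at r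
    have hclose : dist (ξ₀.toFun r) (ξ.toFun r) < 1 := by
      have heq : dist x₀ (ξ₀.toFun r'') = dist x₀ (ξ.toFun r'') := by
        rw [ξ₀.dist_source hrIcc0, ξ.dist_source hrIcc1]
      have hrI : r ∈ Set.Icc 0 (dist x₀ (ξ₀.toFun r'')) := by
        rw [ξ₀.dist_source hrIcc0]; exact ⟨hr.le, hrr''⟩
      have hconv := cat0_convex hX (ξ₀.restrict hrIcc0) (ξ.restrict hrIcc1) heq hrI
      rw [GeoSeg.restrict_toFun, GeoSeg.restrict_toFun, ξ₀.dist_source hrIcc0] at hconv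
      have h2 : (r / r'') * dist (ξ₀.toFun r'') (ξ.toFun r'') < (r / r'') * ε₀ :=
        mul_lt_mul_of_pos_left hclose'' (div_pos hr hr'')
      have h3 : (r / r'') * ε₀ < 1 := by
        rw [hr''def, div_mul_eq_mul_div,
          div_lt_one (mul_pos hr (by linarith : (0:ℝ) < ε₀ + 1))]
        have h4 : 0 < r * ε₀ := mul_pos hr hε₀
        nlinarith [h4]
      linarith [hconv, h2, h3]
    set p := ξ₀.toFun r with hpdef
    set q := ξ.toFun r with hqdef
    obtain ⟨a, ha⟩ := hcov p
    obtain ⟨a', ha'⟩ := hcov q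
    have hXaa' : dist (a • x₀) (a' • x₀) ≤ 2*N + 1 := by
      have t1 := dist_triangle (a • x₀) p (a' • x₀)
      have t2 := dist_triangle p q (a' • x₀)
      rw [dist_comm (a • x₀) p] at t1
      linarith [t1, t2, ha, ha', hclose]
    have hYaa' : dist (a • y₀) (a' • y₀) ≤ lam * (2*N + 1 + C) := by
      calc dist (a • y₀) (a' • y₀) ≤ lam * (dist (a • x₀) (a' • x₀) + C) := qiYX a a'
        _ ≤ lam * (2*N + 1 + C) := mul_le_mul_of_nonneg_left (by linarith) hlam.le
    have hrI0 : r ∈ Set.Icc 0 (dist x₀ (g i₀ • x₀)) := ⟨hr.le, hrr''.trans hd0.le⟩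
    have hrI1 : r ∈ Set.Icc 0 (dist x₀ (g i • x₀)) := ⟨hr.le, hrr''.trans hd1.le⟩
    obtain ⟨η, s₀, hs₀I, hs₀⟩ := hseg (g i₀) a ⟨ξ₀, r, hrI0, ha⟩
    obtain ⟨ζ, s₁, hs₁I, hs₁⟩ := hseg (g i) a' ⟨ξ, r, hrI1, ha'⟩
    -- lower bounds on s₀, s₁
    have hpx : dist x₀ p = r := ξ₀.dist_source hrI0
    have hqx : dist x₀ q = r := ξ.dist_source hrI1
    have hax : r - N ≤ dist x₀ (a • x₀) := by
      have := dist_triangle x₀ (a • x₀) p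
      rw [dist_comm (a • x₀) p] at this
      linarith [this, ha, hpx]
    have ha'x : r - N ≤ dist x₀ (a' • x₀) := by
      have := dist_triangle x₀ (a' • x₀) q
      rw [dist_comm (a' • x₀) q] at this
      linarith [this, ha', hqx]
    have hay : (r - N - C)/lam ≤ dist y₀ (a • y₀) := by
      have h5 := qiXY 1 a
      rw [one_smul, one_smul] at h5
      rw [div_le_iff₀ hlam]
      linarith [h5, hax, mul_comm lam (dist y₀ (a • y₀))]
    have ha'y : (r - N - C)/lam ≤ dist y₀ (a' • y₀) := by
      have h5 := qiXY 1 a'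
      rw [one_smul, one_smul] at h5
      rw [div_le_iff₀ hlam]
      linarith [h5, ha'x, mul_comm lam (dist y₀ (a' • y₀))]
    have hs₀y : dist y₀ (η.toFun s₀) = s₀ := η.dist_source hs₀I
    have hs₁y : dist y₀ (ζ.toFun s₁) = s₁ := ζ.dist_source hs₁I
    set Tl : ℝ := (r - N - C)/lam - M with hTldef
    have hs₀low : Tl ≤ s₀ := by
      have := dist_triangle y₀ (η.toFun s₀) (a • y₀)
      rw [hs₀y] at this
      rw [hTldef]; linarith [this, hs₀, hay]
    have hs₁low : Tl ≤ s₁ := by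
      have := dist_triangle y₀ (ζ.toFun s₁) (a' • y₀)
      rw [hs₁y] at this
      rw [hTldef]; linarith [this, hs₁, ha'y]
    have hTl : Tl = 2*E₀*R/M' + R + 1/lam := by
      rw [hTldef, hrdef]
      field_simp
      ring
    have hinvlam : 0 < 1/lam := one_div_pos.mpr hlam
    have hTlR : R ≤ Tl := by rw [hTl]; linarith
    have hTlE : 2*E₀*R/M' < Tl := by rw [hTl]; linarith
    set T : ℝ := min s₀ s₁ with hTdef
    have hTs₀ : T ≤ s₀ := min_le_left _ _
    have hTs₁ : T ≤ s₁ := min_le_right _ _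
    have hTlT : Tl ≤ T := le_min hs₀low hs₁low
    have hTpos : 0 < T := lt_of_lt_of_le (by rw [hTl]; linarith) hTlT
    have hTI0 : T ∈ Set.Icc 0 (dist y₀ (g i₀ • y₀)) := ⟨hTpos.le, hTs₀.trans hs₀I.2⟩
    have hTI1 : T ∈ Set.Icc 0 (dist y₀ (g i • y₀)) := ⟨hTpos.le, hTs₁.trans hs₁I.2⟩
    have hηTs : dist (η.toFun T) (η.toFun s₀) = s₀ - T := by
      rw [η.isom hTI0 hs₀I, abs_of_nonpos (by linarith), neg_sub]
    have hζTs : dist (ζ.toFun T) (ζ.toFun s₁) = s₁ - T := by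
      rw [ζ.isom hTI1 hs₁I, abs_of_nonpos (by linarith), neg_sub]
    have hmid : dist (η.toFun s₀) (ζ.toFun s₁) ≤ E₀ := by
      have t1 := dist_triangle (η.toFun s₀) (a • y₀) (ζ.toFun s₁)
      have t2 := dist_triangle (a • y₀) (a' • y₀) (ζ.toFun s₁)
      rw [dist_comm (a' • y₀) (ζ.toFun s₁)] at t2
      rw [hE₀def]
      linarith [t1, t2, hs₀, hs₁, hYaa']
    have hs01 : |s₀ - s₁| ≤ E₀ := by
      have h6 : |dist (η.toFun s₀) y₀ - dist (ζ.toFun s₁) y₀| ≤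
          dist (η.toFun s₀) (ζ.toFun s₁) := abs_dist_sub_le _ _ _
      rw [dist_comm (η.toFun s₀) y₀, dist_comm (ζ.toFun s₁) y₀, hs₀y, hs₁y] at h6
      exact h6.trans hmid
    have hTT : dist (η.toFun T) (ζ.toFun T) ≤ 2*E₀ := by
      have t1 := dist_triangle (η.toFun T) (η.toFun s₀) (ζ.toFun T)
      have t2 := dist_triangle (η.toFun s₀) (ζ.toFun s₁) (ζ.toFun T)
      rw [dist_comm (ζ.toFun s₁) (ζ.toFun T)] at t2
      have habs := abs_sub_le_iff.mp hs01
      have hsum : (s₀ - T) + (s₁ - T) ≤ E₀ := by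
        rcases min_le_iff.mp (le_refl T) with h | h
        · rcases le_total s₀ s₁ with hle | hle
          · have : T = s₀ := le_antisymm hTs₀ (le_min le_rfl hle)
            rw [this]; linarith [habs.2]
          · have : T = s₁ := le_antisymm hTs₁ (le_min hle le_rfl)
            rw [this]; linarith [habs.1]
        · rcases le_total s₀ s₁ with hle | hle
          · have : T = s₀ := le_antisymm hTs₀ (le_min le_rfl hle)
            rw [this]; linarith [habs.2]
          · have : T = s₁ := le_antisymm hTs₁ (le_min hle le_rfl)
            rw [this]; linarith [habs.1]
      linarith [t1, t2, hηTs, hζTs, hmid, hsum]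
    constructor
    · -- R < dist y₀ (g i • y₀)
      have h6 := qiXY 1 (g i)
      rw [one_smul, one_smul] at h6
      have hrlarge : lam*R + C < r := by
        have h7 := mul_pos hlam (show (0:ℝ) < 2*E₀*R/M' + M by linarith)
        rw [hrdef]; linarith [h7, hN]
      by_contra hcon
      push_neg at hcon
      have := mul_le_mul_of_nonneg_left hcon hlam.le
      linarith [h6, hd1, hrr'', hrlarge, this]
    · intro γz γ
      have hRI0 : R ∈ Set.Icc 0 (dist y₀ (g i₀ • y₀)) :=
        ⟨hR.le, le_trans (le_trans (hTlR.trans hTlT) hTs₀) hs₀I.2⟩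
      have hRI1 : R ∈ Set.Icc 0 (dist y₀ (g i • y₀)) :=
        ⟨hR.le, le_trans (le_trans (hTlR.trans hTlT) hTs₁) hs₁I.2⟩
      rw [geoSeg_unique hY γz η hRI0, geoSeg_unique hY γ ζ hRI1]
      have heq : dist y₀ (η.toFun T) = dist y₀ (ζ.toFun T) := by
        rw [η.dist_source hTI0, ζ.dist_source hTI1]
      have hRI : R ∈ Set.Icc 0 (dist y₀ (η.toFun T)) := by
        rw [η.dist_source hTI0]; exact ⟨hR.le, hTlR.trans hTlT⟩
      have hconv := cat0_convex hY (η.restrict hTI0) (ζ.restrict hTI1) heq hRI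
      rw [GeoSeg.restrict_toFun, GeoSeg.restrict_toFun, η.dist_source hTI0] at hconv
      calc dist (η.toFun R) (ζ.toFun R)
          ≤ (R / T) * dist (η.toFun T) (ζ.toFun T) := hconv
        _ ≤ (R / T) * (2*E₀) :=
            mul_le_mul_of_nonneg_left hTT (div_nonneg hR.le hTpos.le)
        _ < M' := by
            rw [div_mul_eq_mul_div, div_lt_iff₀ hTpos]
            have h9 : M' * (2*E₀*R/M') < M' * T :=
              mul_lt_mul_of_pos_left (lt_of_lt_of_le hTlE hTlT) hM'
            rw [mul_comm M' (2*E₀*R/M'), div_mul_cancel₀ _ hM'.ne'] at h9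
            linarith [h9, mul_comm M' T]
  exact ⟨⟨M', hM', main⟩, main⟩
end

section
/- Suppose a group G acts geometrically on two CAT(0) spaces X and Y, let x₀ ∈ X, y₀ ∈ Y, and suppose condition (*) holds. If {g_i}, {h_i} ⊂ G are two sequences such that both {g_i x₀} and {h_i x₀} converge to the same point α ∈ ∂X in X ∪ ∂X, then the sequences {g_i y₀} and {h_i y₀} converge in Y ∪ ∂Y to the same point of ∂Y. Consequently the map φ̄ : ∂X → ∂Y sending α to the common limit is well-defined. -/
open Metric Set Pointwise

section Helpers

variable {G Z : Type*} [Group G] [MetricSpace Z] [MulAction G Z]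

theorem dist_orbit (hiso : ∀ g : G, Isometry fun z : Z => g • z) (u v : G) (z : Z) :
    dist z ((u⁻¹ * v) • z) = dist (u • z) (v • z) := by
  have h := (hiso u).dist_eq z ((u⁻¹ * v) • z)
  rw [← h, smul_smul, mul_inv_cancel_left]

theorem orbit_cover {z₀ : Z} {N : ℝ} (hiso : ∀ g : G, Isometry fun z : Z => g • z)
    (hcov : (⋃ g : G, g • Metric.closedBall z₀ N) = Set.univ) :
    ∀ z : Z, ∃ a : G, dist z (a • z₀) ≤ N := by
  intro z
  have hz : z ∈ ⋃ g : G, g • Metric.closedBall z₀ N := by rw [hcov]; trivial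
  obtain ⟨a, ha⟩ := Set.mem_iUnion.1 hz
  refine ⟨a, ?_⟩
  have h1 : dist (a⁻¹ • z) z₀ ≤ N := Metric.mem_closedBall.1 (Set.mem_smul_set_iff_inv_smul_mem.1 ha)
  have h2 := (hiso a).dist_eq (a⁻¹ • z) z₀
  rw [smul_inv_smul] at h2
  rw [h2]
  exact h1

theorem geoseg_dist_source {x y : Z} (γ : GeoSeg Z x y) {s : ℝ}
    (h : s ∈ Set.Icc 0 (dist x y)) : dist x (γ.toFun s) = s := by
  have h0 : (0:ℝ) ∈ Set.Icc 0 (dist x y) := ⟨le_refl _, dist_nonneg⟩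
  have h1 := γ.isom h0 h
  rw [γ.source] at h1
  rw [h1, zero_sub, abs_neg, abs_of_nonneg h.1]

noncomputable def geoseg_restrict {x y : Z} (γ : GeoSeg Z x y) {s : ℝ}
    (h : s ∈ Set.Icc 0 (dist x y)) : GeoSeg Z x (γ.toFun s) where
  toFun := γ.toFun
  source := γ.source
  target := by rw [geoseg_dist_source γ h]
  isom := by
    intro u hu v hv
    rw [geoseg_dist_source γ h] at hu hv
    exact γ.isom ⟨hu.1, hu.2.trans h.2⟩ ⟨hv.1, hv.2.trans h.2⟩

end Helpers


section PartA

variable {G Z : Type*} [Group G] [MetricSpace Z] [MulAction G Z]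

theorem smul_set_compact (hiso : ∀ g : G, Isometry fun z : Z => g • z)
    (g : G) {S : Set Z} (hS : IsCompact S) : IsCompact (g • S) := by
  rw [Set.image_smul.symm]
  exact hS.image (hiso g).continuous

theorem smul_closedBall_eq (hiso : ∀ g : G, Isometry fun z : Z => g • z)
    (g : G) (z : Z) (r : ℝ) :
    g • Metric.closedBall (g⁻¹ • z) r = Metric.closedBall z r := by
  ext y
  rw [Set.mem_smul_set_iff_inv_smul_mem, Metric.mem_closedBall, Metric.mem_closedBall]
  have : dist (g⁻¹ • y) (g⁻¹ • z) = dist y z := (hiso g⁻¹).dist_eq y z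
  rw [this]

/-- PART A: a geodesic space with a geometric action is proper. -/
theorem geom_proper (hgeo : GeodesicSpace Z) (hGA : GeometricAction G Z) :
    ∀ (x : Z) (r : ℝ), IsCompact (Metric.closedBall x r) := by
  obtain ⟨hiso, hprop, K0, hK0c, hK0cov⟩ := hGA
  have cover : ∀ z : Z, ∃ g : G, z ∈ g • K0 := by
    intro z
    have : z ∈ ⋃ g : G, g • K0 := by rw [hK0cov]; trivial
    exact Set.mem_iUnion.1 this
  -- the saturation K1
  set F2 : Set G := {g : G | (g • K0) ∩ K0 ≠ ∅} with hF2def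
  have hF2 : F2.Finite := hprop K0 K0 hK0c hK0c
  set K1 : Set Z := ⋃ w ∈ F2, w • K0 with hK1def
  have hK1c : IsCompact K1 := hF2.isCompact_biUnion (fun w _ => smul_set_compact hiso w hK0c)
  -- fattening: K1 contains a uniform neighborhood of K0
  have fat : ∃ η > (0:ℝ), ∀ z : Z, (∃ k ∈ K0, dist z k ≤ η) → z ∈ K1 := by
    by_contra hcon
    push_neg at hcon
    have hstep : ∀ j : ℕ, ∃ z : Z, (∃ k ∈ K0, dist z k ≤ 1 / (j + 1)) ∧ z ∉ K1 := by
      intro j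
      obtain ⟨z, hz1, hz2⟩ := hcon (1 / (j + 1)) (by positivity)
      exact ⟨z, hz1, hz2⟩
    choose q hq hnot using hstep
    choose k hkK hdk using hq
    obtain ⟨kbar, hkbarK, φ, hφmono, hφtend⟩ := hK0c.tendsto_subseq hkK
    have hqtend : Filter.Tendsto (fun j => q (φ j)) Filter.atTop (nhds kbar) := by
      rw [tendsto_iff_dist_tendsto_zero]
      apply squeeze_zero (fun j => dist_nonneg)
        (g := fun j => 1 / (j + 1) + dist (k (φ j)) kbar)
      · intro j
        calc dist (q (φ j)) kbar ≤ dist (q (φ j)) (k (φ j)) + dist (k (φ j)) kbar :=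
              dist_triangle _ _ _
          _ ≤ 1 / (j + 1) + dist (k (φ j)) kbar := by
              have h1 : (1:ℝ) / (φ j + 1) ≤ 1 / (j + 1) := by
                apply one_div_le_one_div_of_le (by positivity)
                have h0 := hφmono.le_apply (x := j)
                have h0' : (j:ℝ) ≤ (φ j : ℝ) := by exact_mod_cast h0
                linarith
              linarith [hdk (φ j)]
      · have h2 : Filter.Tendsto (fun j : ℕ => dist (k (φ j)) kbar) Filter.atTop (nhds 0) := by
          rw [← tendsto_iff_dist_tendsto_zero]
          exact hφtend
        have h3 := tendsto_one_div_add_atTop_nhds_zero_nat (𝕜 := ℝ)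
        simpa using h3.add h2
    choose h hh using fun j => cover (q (φ j))
    set L : Set Z := insert kbar (Set.range fun j => q (φ j)) with hLdef
    have hLc : IsCompact L := hqtend.isCompact_insert_range
    have hS : {g : G | (g • K0) ∩ L ≠ ∅}.Finite := hprop K0 L hK0c hLc
    haveI := hS.to_subtype
    have hmem : ∀ j : ℕ, h j ∈ {g : G | (g • K0) ∩ L ≠ ∅} := by
      intro j
      refine Set.nonempty_iff_ne_empty.1 ⟨q (φ j), hh j, ?_⟩
      exact Set.mem_insert_of_mem _ ⟨j, rfl⟩
    obtain ⟨⟨b, hbS⟩, hbinf⟩ :=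
      Finite.exists_infinite_fiber (fun j : ℕ => (⟨h j, hmem j⟩ : {g : G | (g • K0) ∩ L ≠ ∅}))
    have hfreq : ∃ᶠ j in Filter.atTop, h j = b := by
      rw [Filter.frequently_atTop]
      intro N
      have : ((fun j : ℕ => (⟨h j, hmem j⟩ : {g : G | (g • K0) ∩ L ≠ ∅})) ⁻¹'
          {⟨b, hbS⟩}).Infinite := Set.infinite_coe_iff.1 hbinf
      obtain ⟨j, hjmem, hjN⟩ := this.exists_gt N
      refine ⟨j, hjN.le, ?_⟩
      have : (⟨h j, hmem j⟩ : {g : G | (g • K0) ∩ L ≠ ∅}) = ⟨b, hbS⟩ := hjmem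
      exact congrArg Subtype.val this
    have hkbK : kbar ∈ b • K0 := by
      apply (smul_set_compact hiso b hK0c).isClosed.mem_of_frequently_of_tendsto
        (f := fun j => q (φ j)) ?_ hqtend
      apply hfreq.mono
      intro j hj
      rw [← hj]
      exact hh j
    have hbF2 : b ∈ F2 := Set.nonempty_iff_ne_empty.1 ⟨kbar, hkbK, hkbarK⟩
    obtain ⟨j, _, hjb⟩ := Filter.frequently_atTop.1 hfreq 0
    apply hnot (φ j)
    rw [hK1def]
    apply Set.mem_biUnion hbF2
    rw [← hjb]
    exact hh j
  obtain ⟨η, hη, hfat⟩ := fat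
  -- uniform local compactness
  have hball : ∀ z : Z, IsCompact (Metric.closedBall z η) := by
    intro z
    obtain ⟨g, hz⟩ := cover z
    have hsub : Metric.closedBall (g⁻¹ • z) η ⊆ K1 := by
      intro y hy
      exact hfat y ⟨g⁻¹ • z, Set.mem_smul_set_iff_inv_smul_mem.1 hz, Metric.mem_closedBall.1 hy⟩
    have hcpt : IsCompact (Metric.closedBall (g⁻¹ • z) η) :=
      hK1c.of_isClosed_subset Metric.isClosed_closedBall hsub
    rw [← smul_closedBall_eq hiso g z η]
    exact smul_set_compact hiso g hcpt
  -- growth induction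
  have grow : ∀ n : ℕ, ∀ z : Z, IsCompact (Metric.closedBall z (η + n * (η / 2))) := by
    intro n
    induction n with
    | zero => intro z; simpa using hball z
    | succ n ih =>
        intro z
        set ρ : ℝ := η + n * (η / 2) with hρdef
        have hρpos : 0 < ρ := by positivity
        have hB := ih z
        obtain ⟨t, htB, htfin, htcov⟩ := hB.elim_finite_subcover_image
          (b := Metric.closedBall z ρ) (c := fun y => Metric.ball y (η / 2))
          (fun y _ => Metric.isOpen_ball)
          (by intro y hy
              exact Set.mem_biUnion hy (Metric.mem_ball_self (by positivity)))
        have hsub : Metric.closedBall z (η + (n + 1 : ℕ) * (η / 2)) ⊆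
            ⋃ y ∈ t, Metric.closedBall y η := by
          intro w hw
          have hw' : dist w z ≤ ρ + η / 2 := by
            have : (η + (n + 1 : ℕ) * (η / 2)) = ρ + η / 2 := by push_cast; ring
            rw [← this]; exact Metric.mem_closedBall.1 hw
          by_cases hcase : dist w z ≤ ρ
          · obtain ⟨y, hyt, hyb⟩ := Set.mem_iUnion₂.1 (htcov (Metric.mem_closedBall.2 hcase))
            refine Set.mem_biUnion hyt (Metric.mem_closedBall.2 ?_)
            have := Metric.mem_ball.1 hyb
            linarith
          · push_neg at hcase
            obtain ⟨σ⟩ := hgeo z w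
            have hd : dist z w = dist w z := dist_comm z w
            have hmemρ : ρ ∈ Set.Icc (0:ℝ) (dist z w) := by
              constructor
              · linarith
              · rw [hd]; linarith
            have hmem0 : (0:ℝ) ∈ Set.Icc (0:ℝ) (dist z w) := ⟨le_refl 0, dist_nonneg⟩
            have hmemd : dist z w ∈ Set.Icc (0:ℝ) (dist z w) := ⟨dist_nonneg, le_refl _⟩
            set u : Z := σ.toFun ρ with hudef
            have hzu : dist z u = ρ := by
              have := σ.isom hmem0 hmemρ
              rw [σ.source] at this
              rw [hudef, this]
              rw [abs_of_nonpos (by linarith)]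
              ring
            have huw : dist u w ≤ η / 2 := by
              have := σ.isom hmemρ hmemd
              rw [σ.target] at this
              rw [hudef, this, abs_of_nonpos (by rw [hd]; linarith)]
              rw [hd]; linarith
            have huB : u ∈ Metric.closedBall z ρ := by
              rw [Metric.mem_closedBall, dist_comm]
              exact hzu.le
            obtain ⟨y, hyt, hyb⟩ := Set.mem_iUnion₂.1 (htcov huB)
            refine Set.mem_biUnion hyt (Metric.mem_closedBall.2 ?_)
            have h1 := Metric.mem_ball.1 hyb
            calc dist w y ≤ dist w u + dist u y := dist_triangle _ _ _
              _ ≤ η := by rw [dist_comm w u]; linarith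
        exact ((htfin.isCompact_biUnion (fun y _ => hball y)).of_isClosed_subset
          Metric.isClosed_closedBall hsub)
  intro x r
  obtain ⟨n, hn⟩ := exists_nat_ge ((r - η) / (η / 2))
  have hr : r ≤ η + n * (η / 2) := by
    have h2 : r - η ≤ n * (η / 2) := by
      rw [div_le_iff₀ (by positivity)] at hn
      linarith
    linarith
  exact (grow n x).of_isClosed_subset Metric.isClosed_closedBall
    (Metric.closedBall_subset_closedBall hr)

end PartA

section PartB

noncomputable def e2 (u v : ℝ) : EuclideanSpace ℝ (Fin 2) :=
  (WithLp.equiv 2 (Fin 2 → ℝ)).symm ![u, v]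

theorem e2_apply_zero (u v : ℝ) : e2 u v 0 = u := rfl
theorem e2_apply_one (u v : ℝ) : e2 u v 1 = v := rfl

theorem dist_e2 (u v u' v' : ℝ) :
    dist (e2 u v) (e2 u' v') = Real.sqrt ((u - u')^2 + (v - v')^2) := by
  rw [EuclideanSpace.dist_eq]
  congr 1
  rw [Fin.sum_univ_two]
  rw [show (e2 u v) 0 = u from rfl, show (e2 u v) 1 = v from rfl,
    show (e2 u' v') 0 = u' from rfl, show (e2 u' v') 1 = v' from rfl]
  rw [Real.dist_eq, Real.dist_eq, sq_abs, sq_abs]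

theorem euclPt_apply (p q : EuclideanSpace ℝ (Fin 2)) (s : ℝ) (i : Fin 2) :
    euclPt p q s i = p i + (s / dist p q) * (q i - p i) := rfl

/-- Key CAT(0) comparison estimate: two geodesics from a common point, at equal
parameter r, are at distance at most `r * dist p q / sqrt (a*b)`. -/
theorem cat0_cmp {Z : Type*} [MetricSpace Z] (hC : IsCAT0 Z) {z₀ p q : Z}
    (γ : GeoSeg Z z₀ p) (δ : GeoSeg Z z₀ q) {r : ℝ} (hr0 : 0 ≤ r)
    (hrp : r ≤ dist z₀ p) (hrq : r ≤ dist z₀ q) :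
    dist (γ.toFun r) (δ.toFun r) ≤
      r * dist p q / Real.sqrt (dist z₀ p * dist z₀ q) := by
  rcases eq_or_lt_of_le hr0 with heq | hrpos
  · -- r = 0
    have h0 : γ.toFun r = δ.toFun r := by
      rw [← heq, γ.source, δ.source]
    rw [h0, dist_self]
    positivity
  set a := dist z₀ p with ha
  set b := dist z₀ q with hb
  set c := dist p q with hc
  have hapos : 0 < a := lt_of_lt_of_le hrpos hrp
  have hbpos : 0 < b := lt_of_lt_of_le hrpos hrq
  have hcnn : 0 ≤ c := dist_nonneg
  have htri1 : c ≤ a + b := by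
    rw [ha, hb, hc]
    calc dist p q ≤ dist p z₀ + dist z₀ q := dist_triangle _ _ _
      _ = dist z₀ p + dist z₀ q := by rw [dist_comm]
  have htri2 : a ≤ b + c := by
    rw [ha, hb, hc]
    calc dist z₀ p ≤ dist z₀ q + dist q p := dist_triangle _ _ _
      _ = dist z₀ q + dist p q := by rw [dist_comm q p]
  have htri3 : b ≤ a + c := by
    rw [ha, hb, hc]
    exact dist_triangle _ _ _
  set c₁ := (a^2 + b^2 - c^2) / (2*a) with hc₁
  have hc₁sq : c₁^2 ≤ b^2 := by
    rw [hc₁, div_pow]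
    rw [div_le_iff₀ (by positivity)]
    have e1 : 0 ≤ c + b - a := by linarith
    have e2 : 0 ≤ c + a - b := by linarith
    have e3 : 0 ≤ a + b - c := by linarith
    have e4 : 0 ≤ a + b + c := by linarith
    nlinarith [mul_nonneg (mul_nonneg (mul_nonneg e1 e2) e3) e4]
  set c₂ := Real.sqrt (b^2 - c₁^2) with hc₂
  have hc₂sq : c₂^2 = b^2 - c₁^2 := Real.sq_sqrt (by linarith)
  set A := e2 0 0 with hA
  set B := e2 a 0 with hB
  set C := e2 c₁ c₂ with hC'
  have hdAB : dist A B = a := by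
    rw [hA, hB, dist_e2]
    rw [show (0 - a)^2 + (0-0)^2 = a^2 by ring]
    exact Real.sqrt_sq hapos.le
  have hdAC : dist A C = b := by
    rw [hA, hC', dist_e2]
    rw [show (0 - c₁)^2 + (0 - c₂)^2 = c₁^2 + c₂^2 by ring, hc₂sq]
    rw [show c₁^2 + (b^2 - c₁^2) = b^2 by ring]
    exact Real.sqrt_sq hbpos.le
  have hdBC : dist B C = c := by
    rw [hB, hC', dist_e2]
    have h2 : (a - c₁)^2 + (0 - c₂)^2 = c^2 := by
      rw [show (0 - c₂)^2 = c₂^2 by ring, hc₂sq, hc₁]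
      field_simp
      ring
    rw [h2]
    exact Real.sqrt_sq hcnn
  have hcomp := hC.2 z₀ p q γ δ A B C (by rw [hdAB]) (by rw [hdAC]) (by rw [hdBC])
    (s := r) ⟨hr0, hrp⟩ (t := r) ⟨hr0, hrq⟩
  refine le_trans hcomp ?_
  -- compute the euclidean distance
  have hE1 : euclPt A B r = e2 r 0 := by
    rw [hA, hB]
    have : dist (e2 0 0) (e2 a 0) = a := hdAB
    refine PiLp.ext fun i => ?_
    rw [euclPt_apply, this]
    fin_cases i
    · show (0:ℝ) + r / a * (a - 0) = r
      field_simp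
      ring
    · show (0:ℝ) + r / a * (0 - 0) = 0
      ring
  have hE2 : euclPt A C r = e2 (r/b*c₁) (r/b*c₂) := by
    rw [hA, hC']
    have : dist (e2 0 0) (e2 c₁ c₂) = b := hdAC
    refine PiLp.ext fun i => ?_
    rw [euclPt_apply, this]
    fin_cases i
    · show (0:ℝ) + r / b * (c₁ - 0) = r/b*c₁
      ring
    · show (0:ℝ) + r / b * (c₂ - 0) = r/b*c₂
      ring
  rw [hE1, hE2, dist_e2]
  have hval : (r - r/b*c₁)^2 + (0 - r/b*c₂)^2 = r^2 * (c^2 - (a-b)^2) / (a*b) := by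
    have hb2 : b ≠ 0 := hbpos.ne'
    have ha2 : a ≠ 0 := hapos.ne'
    rw [show (0 - r/b*c₂)^2 = (r/b)^2 * c₂^2 by ring, hc₂sq, hc₁]
    field_simp
    ring
  rw [hval]
  have hmono : r^2 * (c^2 - (a-b)^2) / (a*b) ≤ (r*c)^2 / (a*b) := by
    apply div_le_div_of_nonneg_right ?_ (by positivity) |>.trans_eq rfl
    nlinarith [sq_nonneg (a - b), sq_nonneg r]
  calc Real.sqrt (r^2 * (c^2 - (a-b)^2) / (a*b)) ≤ Real.sqrt ((r*c)^2/(a*b)) :=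
        Real.sqrt_le_sqrt hmono
    _ = r * c / Real.sqrt (a*b) := by
        rw [Real.sqrt_div (by positivity : (0:ℝ) ≤ (r*c)^2) (a*b),
          Real.sqrt_sq (by positivity : (0:ℝ) ≤ r*c)]
  
theorem geoseg_unique {Z : Type*} [MetricSpace Z] (hC : IsCAT0 Z) {z₀ p : Z}
    (γ δ : GeoSeg Z z₀ p) {r : ℝ} (hr0 : 0 ≤ r) (hrp : r ≤ dist z₀ p) :
    γ.toFun r = δ.toFun r := by
  have h := cat0_cmp hC γ δ hr0 hrp hrp
  rw [dist_self] at h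
  simp only [mul_zero, zero_div] at h
  exact dist_le_zero.1 h

end PartB

/-- Under condition (*), if `{g_i x₀}` and `{h_i x₀}` both converge in
`X ∪ ∂X` to the same boundary point `α`, then `{g_i y₀}` and `{h_i y₀}` converge in
`Y ∪ ∂Y` to the same boundary point of `∂Y`; hence `φ̄ : ∂X → ∂Y` is well-defined. -/
theorem stmt3 {G X Y : Type*} [Group G] [MetricSpace X] [MetricSpace Y]
    [MulAction G X] [MulAction G Y]
    (hX : IsCAT0 X) (hY : IsCAT0 Y)
    (hGX : GeometricAction G X) (hGY : GeometricAction G Y)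
    (x₀ : X) (y₀ : Y) (hstar : ∃ N M : ℝ, CondStar G x₀ y₀ N M)
    (g h : ℕ → G) (α : RayFrom X x₀)
    (hg : ConvTo x₀ (fun i => g i • x₀) α)
    (hh : ConvTo x₀ (fun i => h i • x₀) α) :
    ∃ β : RayFrom Y y₀,
      ConvTo y₀ (fun i => g i • y₀) β ∧ ConvTo y₀ (fun i => h i • y₀) β := by
  classical
  obtain ⟨N, M, hN, hM, hcovX, hcovY, himp⟩ := hstar
  have hisoX := hGX.1
  have hisoY := hGY.1
  have properX : ∀ (x : X) (r : ℝ), IsCompact (Metric.closedBall x r) := geom_proper hX.1 hGX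
  have properY : ∀ (y : Y) (r : ℝ), IsCompact (Metric.closedBall y r) := geom_proper hY.1 hGY
  haveI : ProperSpace Y := ⟨fun y r => properY y r⟩
  -- uniform Y-bound for X-close pairs (Svarc-Milnor type)
  obtain ⟨L, hL0, hL⟩ : ∃ L : ℝ, 0 ≤ L ∧ ∀ v : G, dist x₀ (v • x₀) ≤ 2*N+2 →
      dist y₀ (v • y₀) ≤ L := by
    have hfin : {v : G | dist x₀ (v • x₀) ≤ 2*N+2}.Finite := by
      apply (hGX.2.1 {x₀} (Metric.closedBall x₀ (2*N+2)) isCompact_singleton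
        (properX _ _)).subset
      intro v hv
      simp only [Set.mem_setOf_eq]
      refine Set.nonempty_iff_ne_empty.1 ⟨v • x₀, ?_, ?_⟩
      · rw [Set.smul_set_singleton]; exact Set.mem_singleton _
      · rw [Metric.mem_closedBall, dist_comm]; exact hv
    obtain ⟨L₀, hL₀⟩ := (hfin.image (fun v => dist y₀ (v • y₀))).bddAbove
    refine ⟨max L₀ 0, le_max_right _ _, ?_⟩
    intro v hv
    exact le_trans (hL₀ (Set.mem_image_of_mem _ hv)) (le_max_left _ _)
  -- far in X implies far in Y
  have hD2 : ∀ S : ℝ, ∃ R₁ : ℝ, 0 < R₁ ∧ ∀ v : G, R₁ ≤ dist x₀ (v • x₀) →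
      S < dist y₀ (v • y₀) := by
    intro S
    have hfin : {v : G | dist y₀ (v • y₀) ≤ S}.Finite := by
      apply (hGY.2.1 {y₀} (Metric.closedBall y₀ S) isCompact_singleton
        (properY _ _)).subset
      intro v hv
      simp only [Set.mem_setOf_eq]
      refine Set.nonempty_iff_ne_empty.1 ⟨v • y₀, ?_, ?_⟩
      · rw [Set.smul_set_singleton]; exact Set.mem_singleton _
      · rw [Metric.mem_closedBall, dist_comm]; exact hv
    obtain ⟨R₀, hR₀⟩ := (hfin.image (fun v => dist x₀ (v • x₀))).bddAbove
    refine ⟨max R₀ 0 + 1, by positivity, ?_⟩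
    intro v hv
    by_contra hcon
    push_neg at hcon
    have h1 : dist x₀ (v • x₀) ≤ R₀ := hR₀ (Set.mem_image_of_mem _ hcon)
    have h2 : (R₀ : ℝ) ≤ max R₀ 0 := le_max_left _ _
    linarith
  -- the combined sequence
  set c : ℕ → G := fun i => if i % 2 = 0 then g (i / 2) else h (i / 2) with hcdef
  have hceven : ∀ i : ℕ, c (2*i) = g i := by
    intro i
    have h1 : (2*i) % 2 = 0 := by omega
    have h2 : (2*i) / 2 = i := by omega
    simp only [hcdef]
    rw [h1, h2]
    simp
  have hcodd : ∀ i : ℕ, c (2*i+1) = h i := by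
    intro i
    have h1 : (2*i+1) % 2 = 1 := by omega
    have h2 : (2*i+1) / 2 = i := by omega
    simp only [hcdef]
    rw [h1, h2]
    simp
  have hc : ∀ ε > (0:ℝ), ∀ r > (0:ℝ), ∃ i₀ : ℕ, ∀ i ≥ i₀, memU x₀ α.1 r ε (c i • x₀) := by
    intro ε hε r hr
    obtain ⟨i₁, hi₁⟩ := hg ε hε r hr
    obtain ⟨i₂, hi₂⟩ := hh ε hε r hr
    refine ⟨2 * max i₁ i₂ + 1, ?_⟩
    intro i hi
    rcases Nat.even_or_odd i with ⟨k, hk⟩ | ⟨k, hk⟩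
    · have hik : i = 2*k := by omega
      have hk1 : i₁ ≤ k := by omega
      have := hi₁ k hk1
      rw [hik, hceven k]
      exact this
    · have hik : i = 2*k+1 := by omega
      have hk2 : i₂ ≤ k := by omega
      have := hi₂ k hk2
      rw [hik, hcodd k]
      exact this
  have geoX : ∀ gg : G, GeoSeg X x₀ (gg • x₀) := fun gg => Classical.choice (hX.1 x₀ (gg • x₀))
  have geoY : ∀ gg : G, GeoSeg Y y₀ (gg • y₀) := fun gg => Classical.choice (hY.1 y₀ (gg • y₀))
  set D₀ : ℝ := 2*M + L with hD₀def
  have hD₀pos : 0 < D₀ := by rw [hD₀def]; linarith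
  -- KEY: points far along the Y-geodesics that stay uniformly close
  have KEY : ∀ T : ℝ, 1 ≤ T → ∃ i₀ : ℕ, ∃ ss : ℕ → ℝ, ∀ i ≥ i₀,
      (T ≤ ss i ∧ ss i ∈ Set.Icc 0 (dist y₀ (c i • y₀))) ∧
      ∀ j ≥ i₀, dist ((geoY (c i)).toFun (ss i)) ((geoY (c j)).toFun (ss j)) ≤ D₀ := by
    intro T hT
    obtain ⟨R₁, hR₁pos, hR₁⟩ := hD2 (T + M)
    set R : ℝ := R₁ + N + 1 with hRdef
    have hRpos : 0 < R := by rw [hRdef]; linarith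
    obtain ⟨i₀, hi₀⟩ := hc 1 one_pos R hRpos
    have hsel : ∀ i : ℕ, ∃ (a : G) (s : ℝ), i₀ ≤ i →
        dist ((geoX (c i)).toFun R) (a • x₀) ≤ N ∧
        s ∈ Set.Icc 0 (dist y₀ (c i • y₀)) ∧
        dist ((geoY (c i)).toFun s) (a • y₀) ≤ M := by
      intro i
      by_cases hi : i₀ ≤ i
      · obtain ⟨hRlt, hγcl⟩ := hi₀ i hi
        obtain ⟨a, ha⟩ := orbit_cover hisoX hcovX ((geoX (c i)).toFun R)
        have hseg : SegMeetsBall x₀ (c i • x₀) (a • x₀) N :=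
          ⟨geoX (c i), R, ⟨hRpos.le, hRlt.le⟩, ha⟩
        obtain ⟨δ', s, hsIcc, hsM⟩ := himp (c i) a hseg
        refine ⟨a, s, fun _ => ⟨ha, hsIcc, ?_⟩⟩
        rw [geoseg_unique hY (geoY (c i)) δ' hsIcc.1 hsIcc.2]
        exact hsM
      · exact ⟨1, 0, fun hcon => absurd hcon hi⟩
    choose aa ss hsel using hsel
    refine ⟨i₀, ss, ?_⟩
    have hfact : ∀ i, i₀ ≤ i →
        (T ≤ ss i ∧ ss i ∈ Set.Icc 0 (dist y₀ (c i • y₀))) ∧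
        dist ((geoY (c i)).toFun (ss i)) (aa i • y₀) ≤ M ∧
        dist (α.1 R) ((geoX (c i)).toFun R) < 1 ∧
        dist ((geoX (c i)).toFun R) (aa i • x₀) ≤ N := by
      intro i hi
      obtain ⟨haN, hsIcc, hsM⟩ := hsel i hi
      obtain ⟨hRlt, hγcl⟩ := hi₀ i hi
      have hα := hγcl (geoX (c i))
      have hxR : dist x₀ ((geoX (c i)).toFun R) = R :=
        geoseg_dist_source _ ⟨hRpos.le, hRlt.le⟩
      have haX : R₁ ≤ dist x₀ (aa i • x₀) := by
        have htr := dist_triangle x₀ (aa i • x₀) ((geoX (c i)).toFun R)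
        rw [hxR] at htr
        have hcomm : dist (aa i • x₀) ((geoX (c i)).toFun R) ≤ N := by
          rw [dist_comm]; exact haN
        rw [hRdef] at htr
        linarith
      have haY : T + M < dist y₀ (aa i • y₀) := hR₁ (aa i) haX
      have hys : dist y₀ ((geoY (c i)).toFun (ss i)) = ss i := geoseg_dist_source _ hsIcc
      have hT' : T ≤ ss i := by
        have htr := dist_triangle y₀ ((geoY (c i)).toFun (ss i)) (aa i • y₀)
        rw [hys] at htr
        linarith
      exact ⟨⟨hT', hsIcc⟩, hsM, hα, haN⟩
    intro i hi
    obtain ⟨hTi, hMi, hαi, hNi⟩ := hfact i hi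
    refine ⟨hTi, ?_⟩
    intro j hj
    obtain ⟨hTj, hMj, hαj, hNj⟩ := hfact j hj
    have hXij : dist (aa i • x₀) (aa j • x₀) ≤ 2*N + 2 := by
      have t1 := dist_triangle (aa i • x₀) ((geoX (c i)).toFun R) (aa j • x₀)
      have t2 := dist_triangle4 ((geoX (c i)).toFun R) (α.1 R)
        ((geoX (c j)).toFun R) (aa j • x₀)
      have b1 : dist (aa i • x₀) ((geoX (c i)).toFun R) ≤ N := by
        rw [dist_comm]; exact hNi
      have b2 : dist ((geoX (c i)).toFun R) (α.1 R) < 1 := by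
        rw [dist_comm]; exact hαi
      have b3 : dist (α.1 R) ((geoX (c j)).toFun R) < 1 := hαj
      have b4 : dist ((geoX (c j)).toFun R) (aa j • x₀) ≤ N := hNj
      linarith
    have hYij : dist (aa i • y₀) (aa j • y₀) ≤ L := by
      have h1 := dist_orbit hisoX (aa i) (aa j) x₀
      have h2 := dist_orbit hisoY (aa i) (aa j) y₀
      rw [← h2]
      apply hL
      rw [h1]
      exact hXij
    have h6 := dist_triangle4 ((geoY (c i)).toFun (ss i)) (aa i • y₀) (aa j • y₀)
      ((geoY (c j)).toFun (ss j))
    have h7 : dist (aa j • y₀) ((geoY (c j)).toFun (ss j)) ≤ M := by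
      rw [dist_comm]; exact hMj
    rw [hD₀def]
    linarith
  -- convergence estimate at every radius
  have estim : ∀ r : ℝ, 0 ≤ r → ∀ ε : ℝ, 0 < ε → ∃ i₀ : ℕ, ∀ i ≥ i₀,
      r ≤ dist y₀ (c i • y₀) ∧
      ∀ j ≥ i₀, dist ((geoY (c i)).toFun r) ((geoY (c j)).toFun r) ≤ ε := by
    intro r hr ε hε
    set T : ℝ := max 1 (max r (2*r*D₀/ε)) with hTdef
    have hT1 : 1 ≤ T := le_max_left _ _
    have hTr : r ≤ T := le_trans (le_max_left _ _) (le_max_right _ _)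
    have hT2 : 2*r*D₀/ε ≤ T := le_trans (le_max_right _ _) (le_max_right _ _)
    have hTpos : (0:ℝ) < T := lt_of_lt_of_le one_pos hT1
    obtain ⟨i₀, ss, hKEY⟩ := KEY T hT1
    refine ⟨i₀, ?_⟩
    intro i hi
    obtain ⟨⟨hTi, hIcci⟩, hcross⟩ := hKEY i hi
    refine ⟨le_trans hTr (le_trans hTi hIcci.2), ?_⟩
    intro j hj
    obtain ⟨⟨hTj, hIccj⟩, _⟩ := hKEY j hj
    have hri : r ≤ ss i := le_trans hTr hTi
    have hrj : r ≤ ss j := le_trans hTr hTj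
    have hdi : dist y₀ ((geoY (c i)).toFun (ss i)) = ss i := geoseg_dist_source _ hIcci
    have hdj : dist y₀ ((geoY (c j)).toFun (ss j)) = ss j := geoseg_dist_source _ hIccj
    have hcmp := cat0_cmp hY (geoseg_restrict (geoY (c i)) hIcci)
        (geoseg_restrict (geoY (c j)) hIccj) hr
        (by rw [hdi]; exact hri) (by rw [hdj]; exact hrj)
    rw [hdi, hdj] at hcmp
    refine le_trans hcmp ?_
    have hcross' := hcross j hj
    have hsq : T ≤ Real.sqrt (ss i * ss j) := by
      rw [← Real.sqrt_sq hTpos.le]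
      apply Real.sqrt_le_sqrt
      nlinarith
    have h5 : r * dist ((geoY (c i)).toFun (ss i)) ((geoY (c j)).toFun (ss j)) /
        Real.sqrt (ss i * ss j) ≤ r * D₀ / T :=
      div_le_div₀ (by positivity) (mul_le_mul_of_nonneg_left hcross' hr) hTpos hsq
    refine le_trans h5 ?_
    rw [div_le_iff₀ hTpos]
    have h6 : 2*r*D₀ ≤ T * ε := by
      rw [div_le_iff₀ hε] at hT2
      exact hT2
    nlinarith [mul_nonneg hr hD₀pos.le]
  -- the limit ray
  have hlim : ∀ r : ℝ, 0 ≤ r → ∃ b : Y, Filter.Tendsto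
      (fun i => if r ≤ dist y₀ (c i • y₀) then (geoY (c i)).toFun r else y₀)
      Filter.atTop (nhds b) := by
    intro r hr
    apply cauchySeq_tendsto_of_complete
    rw [Metric.cauchySeq_iff]
    intro ε hε
    obtain ⟨i₀, hi₀⟩ := estim r hr (ε/2) (by positivity)
    refine ⟨i₀, ?_⟩
    intro m hm n hn
    obtain ⟨hbm, hdm⟩ := hi₀ m hm
    obtain ⟨hbn, _⟩ := hi₀ n hn
    rw [if_pos hbm, if_pos hbn]
    calc dist ((geoY (c m)).toFun r) ((geoY (c n)).toFun r) ≤ ε/2 := hdm n hn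
      _ < ε := by linarith
  obtain ⟨βf, hβf⟩ : ∃ βf : ℝ → Y, ∀ r : ℝ, 0 ≤ r → Filter.Tendsto
      (fun i => if r ≤ dist y₀ (c i • y₀) then (geoY (c i)).toFun r else y₀)
      Filter.atTop (nhds (βf r)) := by
    choose f hf using hlim
    refine ⟨fun r => if hr : 0 ≤ r then f r hr else y₀, fun r hr => ?_⟩
    have hrw : (fun r : ℝ => if hr : 0 ≤ r then f r hr else y₀) r = f r hr := dif_pos hr
    rw [hrw]
    exact hf r hr
  have hβ0 : βf 0 = y₀ := by
    have h1 := hβf 0 le_rfl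
    have h2 : Filter.Tendsto (fun i : ℕ => if (0:ℝ) ≤ dist y₀ (c i • y₀)
        then (geoY (c i)).toFun 0 else y₀) Filter.atTop (nhds y₀) := by
      have he : (fun i : ℕ => if (0:ℝ) ≤ dist y₀ (c i • y₀)
          then (geoY (c i)).toFun 0 else y₀) = fun _ => y₀ := by
        funext i
        rw [if_pos dist_nonneg, (geoY (c i)).source]
      rw [he]
      exact tendsto_const_nhds
    exact tendsto_nhds_unique h1 h2
  have hβiso : ∀ ⦃s : ℝ⦄, 0 ≤ s → ∀ ⦃t : ℝ⦄, 0 ≤ t → dist (βf s) (βf t) = |s - t| := by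
    intro s hs t ht
    have h1 := (hβf s hs).dist (hβf t ht)
    obtain ⟨i₁, hi₁⟩ := estim (max s t) (le_max_of_le_left hs) 1 one_pos
    have h3 : Filter.Tendsto (fun i : ℕ => dist
        (if s ≤ dist y₀ (c i • y₀) then (geoY (c i)).toFun s else y₀)
        (if t ≤ dist y₀ (c i • y₀) then (geoY (c i)).toFun t else y₀))
        Filter.atTop (nhds (|s-t|)) := by
      apply Filter.Tendsto.congr' ?_ tendsto_const_nhds
      filter_upwards [Filter.eventually_ge_atTop i₁] with i hi
      have hb := (hi₁ i hi).1
      have hbs : s ≤ dist y₀ (c i • y₀) := le_trans (le_max_left _ _) hb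
      have hbt : t ≤ dist y₀ (c i • y₀) := le_trans (le_max_right _ _) hb
      rw [if_pos hbs, if_pos hbt]
      exact ((geoY (c i)).isom ⟨hs, hbs⟩ ⟨ht, hbt⟩).symm
    exact tendsto_nhds_unique h1 h3
  have mainconv : ∀ ε > (0:ℝ), ∀ r > (0:ℝ), ∃ i₀ : ℕ, ∀ i ≥ i₀,
      memU y₀ βf r ε (c i • y₀) := by
    intro ε hε r hr
    obtain ⟨i₁, hi₁⟩ := estim (r+1) (by linarith) 1 one_pos
    obtain ⟨i₂, hi₂⟩ := estim r hr.le (ε/2) (by positivity)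
    refine ⟨max i₁ i₂, ?_⟩
    intro i hi
    have hii₁ : i₁ ≤ i := le_trans (le_max_left _ _) hi
    have hii₂ : i₂ ≤ i := le_trans (le_max_right _ _) hi
    have hfar : r + 1 ≤ dist y₀ (c i • y₀) := (hi₁ i hii₁).1
    refine ⟨by linarith, ?_⟩
    intro γ'
    have hub : r ≤ dist y₀ (c i • y₀) := by linarith
    have hγ'eq : γ'.toFun r = (geoY (c i)).toFun r :=
      geoseg_unique hY γ' (geoY (c i)) hr.le hub
    rw [hγ'eq]
    have h1 : Filter.Tendsto (fun j : ℕ => dist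
        (if r ≤ dist y₀ (c j • y₀) then (geoY (c j)).toFun r else y₀)
        ((geoY (c i)).toFun r))
        Filter.atTop (nhds (dist (βf r) ((geoY (c i)).toFun r))) :=
      (hβf r hr.le).dist tendsto_const_nhds
    have h2 : dist (βf r) ((geoY (c i)).toFun r) ≤ ε/2 := by
      apply le_of_tendsto h1
      filter_upwards [Filter.eventually_ge_atTop i₂] with j hj
      rw [if_pos (hi₂ j hj).1]
      exact (hi₂ j hj).2 i hii₂
    linarith
  refine ⟨⟨βf, hβ0, hβiso⟩, ?_, ?_⟩
  · intro ε hε r hr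
    obtain ⟨i₀, hi₀⟩ := mainconv ε hε r hr
    refine ⟨i₀, ?_⟩
    intro i hi
    have h1 := hi₀ (2*i) (by omega)
    rw [hceven i] at h1
    exact h1
  · intro ε hε r hr
    obtain ⟨i₀, hi₀⟩ := mainconv ε hε r hr
    refine ⟨i₀, ?_⟩
    intro i hi
    have h1 := hi₀ (2*i+1) (by omega)
    rw [hcodd i] at h1
    exact h1
end
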